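/- Let G be a group generated by x and y with x² = yᵐ, m = 2l even, and t₁ = xy, t₂ = yx. Then the alternating product t₁t₂t₁⋯ of length m equals y^{m(l+1)}, and so does the alternating product t₂t₁t₂⋯ of length m. -/
import Mathlib


theorem alternating_word_even_case {G : Type*} [Group G] (x y : G) (l m : ℕ)
    (hl : 1 ≤ l) (hm : m = 2 * l)
    (hgen : Subgroup.closure ({x, y} : Set G) = ⊤)
    (hxy : x ^ 2 = y ^ m) :
    (x * y * (y * x)) ^ l = y ^ (m * (l + 1)) ∧
      (y * x * (x * y)) ^ l = y ^ (m * (l + 1)) := by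
  -- y ^ m is central
  have hc : ∀ g : G, Commute (y ^ m) g := by
    intro g
    have hsub : Subgroup.closure ({x, y} : Set G) ≤ Subgroup.centralizer {y ^ m} := by
      rw [Subgroup.closure_le]
      intro a ha
      rcases ha with h | h
      · subst h
        rw [SetLike.mem_coe, Subgroup.mem_centralizer_iff]
        intro h hh
        simp only [Set.mem_singleton_iff] at hh
        subst hh
        rw [← hxy]
        group
      · simp only [Set.mem_singleton_iff] at h
        subst h
        rw [SetLike.mem_coe, Subgroup.mem_centralizer_iff]
        intro h hh
        simp only [Set.mem_singleton_iff] at hh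
        subst hh
        rw [← pow_succ, ← pow_succ']
    have : g ∈ Subgroup.centralizer {y ^ m} := by
      apply hsub
      rw [hgen]; trivial
    exact Subgroup.mem_centralizer_iff.mp this (y ^ m) rfl
  constructor
  · have key : x * y * (y * x) = (x * y ^ 2 * x⁻¹) * y ^ m := by
      rw [← hxy, pow_two, pow_two]; group
    rw [key, ((hc (x * y ^ 2 * x⁻¹)).symm).mul_pow, conj_pow, ← pow_mul,
      show 2 * l = m by omega, ← (hc x).eq]
    have h2 : y ^ m * x * x⁻¹ * (y ^ m) ^ l = y ^ m * (y ^ m) ^ l := by group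
    rw [h2, ← pow_mul, ← pow_add]
    congr 1
    ring
  · have key : y * x * (x * y) = y ^ (m + 2) := by
      have : y * x * (x * y) = y * x ^ 2 * y := by rw [pow_two]; group
      rw [this, hxy]
      rw [pow_add, pow_two]
      group
    rw [key, ← pow_mul]
    congr 1
    subst hm
    ring
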